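/- Let F ∈ ℤ[x₁,…,xₙ]. Suppose there are infinitely many prime numbers p such that the reduction F̄ of F modulo p (i.e. the image of F in 𝔽_p[x₁,…,xₙ]) is invariant under some nontrivial translation, meaning there exists a nonzero m ∈ 𝔽̄_pⁿ with F̄(x+m) = F̄(x) as polynomials over the algebraic closure 𝔽̄_p. Then there exists a nonzero m ∈ ℚ̄ⁿ (ℚ̄ an algebraic closure of ℚ) with F(x+m) = F(x) as polynomials over ℚ̄. -/

import Mathlib

set_option maxHeartbeats 1000000


open MvPolynomial

/-- The polynomial `F(x + y) - F(x)` viewed as a polynomial in `x` with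
coefficients in `ℤ[y]`. -/
noncomputable def Gpoly (n : ℕ) (F : MvPolynomial (Fin n) ℤ) :
    MvPolynomial (Fin n) (MvPolynomial (Fin n) ℤ) :=
  (aeval fun i : Fin n => (X i + C (X i) : MvPolynomial (Fin n) (MvPolynomial (Fin n) ℤ))) F
    - MvPolynomial.map (C : ℤ →+* MvPolynomial (Fin n) ℤ) F

open scoped Classical in
noncomputable def coeffSet (n : ℕ) (F : MvPolynomial (Fin n) ℤ) :
    Finset (MvPolynomial (Fin n) ℤ) :=
  (Gpoly n F).support.image fun d => coeff d (Gpoly n F)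

lemma key (n : ℕ) (F : MvPolynomial (Fin n) ℤ) {K : Type} [CommRing K] (m : Fin n → K) :
    MvPolynomial.map ((eval m).comp (MvPolynomial.map (Int.castRingHom K))) (Gpoly n F)
      = (aeval fun i => X i + C (m i)) (MvPolynomial.map (Int.castRingHom K) F)
        - MvPolynomial.map (Int.castRingHom K) F := by
  unfold Gpoly
  rw [map_sub]
  congr 1
  · have h1 : (MvPolynomial.map ((eval m).comp (MvPolynomial.map (Int.castRingHom K)))).comp
        (((aeval fun i : Fin n => (X i + C (X i) : MvPolynomial (Fin n) (MvPolynomial (Fin n) ℤ))) : MvPolynomial (Fin n) ℤ →ₐ[ℤ] MvPolynomial (Fin n) (MvPolynomial (Fin n) ℤ)) : MvPolynomial (Fin n) ℤ →+* MvPolynomial (Fin n) (MvPolynomial (Fin n) ℤ))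
        = (((aeval fun i => X i + C (m i)) : MvPolynomial (Fin n) K →ₐ[K] MvPolynomial (Fin n) K) : MvPolynomial (Fin n) K →+* MvPolynomial (Fin n) K).comp
          (MvPolynomial.map (Int.castRingHom K)) := by
      apply MvPolynomial.ringHom_ext
      · intro r; simp
      · intro i; simp
    exact DFunLike.congr_fun h1 F
  · rw [MvPolynomial.map_map]
    have : (((eval m).comp (MvPolynomial.map (Int.castRingHom K))).comp C) = Int.castRingHom K :=
      RingHom.ext_int _ _
    rw [this]

lemma inv_iff (n : ℕ) (F : MvPolynomial (Fin n) ℤ) {K : Type} [CommRing K] (m : Fin n → K) :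
    (aeval fun i => X i + C (m i)) (MvPolynomial.map (Int.castRingHom K) F)
        = MvPolynomial.map (Int.castRingHom K) F ↔
      ∀ c ∈ coeffSet n F, eval m (MvPolynomial.map (Int.castRingHom K) c) = 0 := by
  classical
  rw [← sub_eq_zero, ← key n F m]
  constructor
  · intro hG c hc
    obtain ⟨d, _, rfl⟩ := Finset.mem_image.mp hc
    have := congrArg (coeff d) hG
    rwa [coeff_map, coeff_zero] at this
  · intro hc
    apply MvPolynomial.ext
    intro d
    rw [coeff_map, coeff_zero]
    by_cases hd : d ∈ (Gpoly n F).support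
    · exact hc _ (Finset.mem_image.mpr ⟨d, hd, rfl⟩)
    · rw [MvPolynomial.notMem_support_iff.mp hd]
      simp

section Proj

variable {n : ℕ} {L : Type} [Field L] [Algebra ℚ L]

noncomputable def proj (π : L →ₗ[ℚ] ℚ) (f : MvPolynomial (Fin n) L) : MvPolynomial (Fin n) ℚ :=
  .ofCoeff (Finsupp.mapRange π π.map_zero (AddMonoidAlgebra.coeff f))

lemma coeff_proj (π : L →ₗ[ℚ] ℚ) (f : MvPolynomial (Fin n) L) (d : Fin n →₀ ℕ) :
    coeff d (proj π f) = π (coeff d f) :=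
  Finsupp.mapRange_apply (hf := π.map_zero)

lemma proj_add (π : L →ₗ[ℚ] ℚ) (f g : MvPolynomial (Fin n) L) :
    proj π (f + g) = proj π f + proj π g := by
  apply MvPolynomial.ext; intro d
  simp [coeff_proj, coeff_add]

lemma proj_mul_map (π : L →ₗ[ℚ] ℚ) (g : MvPolynomial (Fin n) L) (h : MvPolynomial (Fin n) ℚ) :
    proj π (g * MvPolynomial.map (algebraMap ℚ L) h) = proj π g * h := by
  apply MvPolynomial.ext; intro d
  rw [coeff_proj, coeff_mul, coeff_mul, map_sum]
  apply Finset.sum_congr rfl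
  intro x _
  rw [coeff_proj, coeff_map]
  have : coeff x.1 g * algebraMap ℚ L (coeff x.2 h) = coeff x.2 h • coeff x.1 g := by
    rw [Algebra.smul_def]; ring
  rw [this, map_smul, smul_eq_mul, mul_comm]

lemma proj_map (π : L →ₗ[ℚ] ℚ) (hπ : ∀ q : ℚ, π (algebraMap ℚ L q) = q)
    (h : MvPolynomial (Fin n) ℚ) :
    proj π (MvPolynomial.map (algebraMap ℚ L) h) = h := by
  apply MvPolynomial.ext; intro d
  rw [coeff_proj, coeff_map, hπ]

lemma exists_proj : ∃ π : L →ₗ[ℚ] ℚ, ∀ q : ℚ, π (algebraMap ℚ L q) = q := by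
  obtain ⟨g, hg⟩ := (Algebra.linearMap ℚ L).exists_leftInverse_of_injective
    (LinearMap.ker_eq_bot.mpr (algebraMap ℚ L).injective)
  exact ⟨g, fun q => LinearMap.congr_fun hg q⟩

open scoped Classical in
lemma descend (S : Finset (MvPolynomial (Fin n) ℚ)) (q : MvPolynomial (Fin n) ℚ)
    (hq : MvPolynomial.map (algebraMap ℚ L) q ∈
      Ideal.span ↑(S.image (MvPolynomial.map (algebraMap ℚ L)))) :
    q ∈ Ideal.span (↑S : Set (MvPolynomial (Fin n) ℚ)) := by
  classical
  obtain ⟨π, hπ⟩ := (exists_proj : ∃ π : L →ₗ[ℚ] ℚ, _)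
  obtain ⟨c, -, hc⟩ := Submodule.mem_span_finset.mp hq
  have hqe : q = ∑ t ∈ S.image (MvPolynomial.map (algebraMap ℚ L)), proj π (c t * t) := by
    have := congrArg (proj π) hc
    rw [proj_map π hπ] at this
    rw [← this]
    clear this hc
    induction S.image (MvPolynomial.map (algebraMap ℚ L)) using Finset.induction with
    | empty => simp [proj, Finsupp.mapRange_zero]
    | insert _ _ hx ih => rw [Finset.sum_insert hx, Finset.sum_insert hx, proj_add, ih, smul_eq_mul]
  rw [hqe]
  apply Ideal.sum_mem
  intro t ht
  obtain ⟨s, hs, rfl⟩ := Finset.mem_image.mp ht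
  rw [proj_mul_map]
  exact Ideal.mul_mem_left _ _ (Ideal.subset_span hs)

end Proj

lemma clear_denom {n : ℕ} (q : MvPolynomial (Fin n) ℚ) :
    ∃ (d : ℤ) (w : MvPolynomial (Fin n) ℤ), d ≠ 0 ∧
      MvPolynomial.map (Int.castRingHom ℚ) w = C (d : ℚ) * q := by
  classical
  set d : ℤ := ∏ a ∈ q.support, ((coeff a q).den : ℤ) with hd
  have hdne : d ≠ 0 := by
    apply Finset.prod_ne_zero_iff.mpr
    intro a _
    exact_mod_cast (coeff a q).den_nz
  refine ⟨d, ∑ a ∈ q.support, monomial a ((coeff a q).num * (d / ((coeff a q).den : ℤ))), hdne, ?_⟩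
  rw [map_sum]
  conv_rhs => rw [q.as_sum, Finset.mul_sum]
  apply Finset.sum_congr rfl
  intro a ha
  rw [MvPolynomial.map_monomial, C_mul_monomial]
  congr 1
  have hdvd : ((coeff a q).den : ℤ) ∣ d := Finset.dvd_prod_of_mem _ ha
  obtain ⟨e, he⟩ := hdvd
  rw [he, Int.mul_ediv_cancel_left _ (by exact_mod_cast (coeff a q).den_nz)]
  have h2 : ((coeff a q).den : ℚ) * coeff a q = ((coeff a q).num : ℚ) := by
    rw [mul_comm, Rat.mul_den_eq_num]
  simp only [map_mul, eq_intCast]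
  push_cast
  rw [← h2]
  ring

open scoped Classical in
lemma exists_int_relation (n : ℕ) (F : MvPolynomial (Fin n) ℤ)
    (hQ : ∀ m : Fin n → AlgebraicClosure ℚ, m ≠ 0 →
      ¬ (aeval fun i => X i + MvPolynomial.C (m i))
          (MvPolynomial.map (Int.castRingHom (AlgebraicClosure ℚ)) F) =
        MvPolynomial.map (Int.castRingHom (AlgebraicClosure ℚ)) F) (i : Fin n) :
    ∃ (N : ℕ) (d : ℤ), d ≠ 0 ∧
      (C d * X i ^ N : MvPolynomial (Fin n) ℤ) ∈ Ideal.span (↑(coeffSet n F) : Set _) := by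
  classical
  set SL : Finset (MvPolynomial (Fin n) (AlgebraicClosure ℚ)) :=
    (coeffSet n F).image (MvPolynomial.map (Int.castRingHom (AlgebraicClosure ℚ))) with hSL
  -- the zero locus is contained in {0}
  have hzero : MvPolynomial.zeroLocus (AlgebraicClosure ℚ) (Ideal.span (↑SL : Set (MvPolynomial (Fin n) (AlgebraicClosure ℚ)))) ⊆ ({0} : Set (Fin n → AlgebraicClosure ℚ)) := by
    intro m hm
    simp only [Set.mem_singleton_iff]
    by_contra hmne
    apply hQ m hmne
    rw [inv_iff]
    intro c hc
    simpa using hm _ (Ideal.subset_span (Finset.mem_coe.mpr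
      (Finset.mem_image.mpr ⟨c, hc, rfl⟩)))
  -- Nullstellensatz: X i is in the radical
  have hXrad : (X i : MvPolynomial (Fin n) (AlgebraicClosure ℚ)) ∈ (Ideal.span (↑SL : Set _)).radical := by
    rw [← MvPolynomial.vanishingIdeal_zeroLocus_eq_radical (K := AlgebraicClosure ℚ)]
    intro x hx
    have : x = 0 := hzero hx
    subst this
    simp
  obtain ⟨N, hN⟩ := hXrad
  -- rewrite the ideal over L as the extension of the ideal over ℚ
  have hcast : (Int.castRingHom (AlgebraicClosure ℚ)) = (algebraMap ℚ (AlgebraicClosure ℚ)).comp (Int.castRingHom ℚ) :=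
    RingHom.ext_int _ _
  have hSL' : SL = ((coeffSet n F).image (MvPolynomial.map (Int.castRingHom ℚ))).image
      (MvPolynomial.map (algebraMap ℚ (AlgebraicClosure ℚ))) := by
    rw [hSL, Finset.image_image]
    apply Finset.image_congr
    intro c _
    simp only [Function.comp_apply]
    rw [MvPolynomial.map_map, hcast]
  -- descend to ℚ
  have hXQ : (X i ^ N : MvPolynomial (Fin n) ℚ) ∈
      Ideal.span (↑((coeffSet n F).image (MvPolynomial.map (Int.castRingHom ℚ))) : Set _) := by
    apply descend (L := AlgebraicClosure ℚ)
    have : MvPolynomial.map (algebraMap ℚ (AlgebraicClosure ℚ)) (X i ^ N : MvPolynomial (Fin n) ℚ)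
        = (X i : MvPolynomial (Fin n) (AlgebraicClosure ℚ)) ^ N := by
      simp
    rw [this, ← hSL']
    exact hN
  -- clear denominators
  obtain ⟨c, -, hc⟩ := Submodule.mem_span_finset.mp hXQ
  choose dt wt hdt hwt using fun t => clear_denom (c t)
  set T := (coeffSet n F).image (MvPolynomial.map (Int.castRingHom ℚ)) with hT
  set D : ℤ := ∏ t ∈ T, dt t with hD
  have hDne : D ≠ 0 := Finset.prod_ne_zero_iff.mpr fun t _ => hdt t
  -- choose a preimage in coeffSet for each t ∈ T
  have hpre : ∀ t ∈ T, ∃ s ∈ coeffSet n F, MvPolynomial.map (Int.castRingHom ℚ) s = t := by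
    intro t ht
    obtain ⟨s, hs, rfl⟩ := Finset.mem_image.mp ht
    exact ⟨s, hs, rfl⟩
  choose st hst hstm using hpre
  -- the integral relation
  refine ⟨N, D, hDne, ?_⟩
  have hinj : Function.Injective (MvPolynomial.map (Int.castRingHom ℚ) :
      MvPolynomial (Fin n) ℤ → MvPolynomial (Fin n) ℚ) :=
    MvPolynomial.map_injective _ Int.cast_injective
  have hmain : (C D * X i ^ N : MvPolynomial (Fin n) ℤ)
      = ∑ t ∈ T.attach, C (D / dt t.1) * wt t.1 * st t.1 t.2 := by
    apply hinj
    have hL : MvPolynomial.map (Int.castRingHom ℚ) (C D * X i ^ N : MvPolynomial (Fin n) ℤ)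
        = C ((D : ℚ)) * (X i ^ N : MvPolynomial (Fin n) ℚ) := by
      simp
    rw [hL, ← hc, Finset.mul_sum, map_sum,
      ← Finset.sum_attach T (fun t => C ((D : ℤ) : ℚ) * (c t • t))]
    apply Finset.sum_congr rfl
    intro t _
    have hdvd : dt t.1 ∣ D := Finset.dvd_prod_of_mem _ t.2
    have kk : (C ((D : ℤ) : ℚ) : MvPolynomial (Fin n) ℚ)
        = C ((D / dt t.1 : ℤ) : ℚ) * C ((dt t.1 : ℤ) : ℚ) := by
      rw [← C_mul]
      norm_cast
      rw [Int.ediv_mul_cancel hdvd]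
    rw [smul_eq_mul, map_mul, map_mul, MvPolynomial.map_C,
      hwt t.1, hstm t.1 t.2, kk, eq_intCast (Int.castRingHom ℚ)]
    ring
  rw [hmain]
  apply Ideal.sum_mem
  intro t _
  exact Ideal.mul_mem_left _ _ (Ideal.subset_span (hst t.1 t.2))

theorem translation_invariance_from_reductions (n : ℕ) (F : MvPolynomial (Fin n) ℤ)
    (h : {p : ℕ | ∃ _ : Fact p.Prime,
        ∃ m : Fin n → AlgebraicClosure (ZMod p), m ≠ 0 ∧
          (aeval fun i => X i + MvPolynomial.C (m i))
              (MvPolynomial.map (Int.castRingHom (AlgebraicClosure (ZMod p))) F) =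
            MvPolynomial.map (Int.castRingHom (AlgebraicClosure (ZMod p))) F}.Infinite) :
    ∃ m : Fin n → AlgebraicClosure ℚ, m ≠ 0 ∧
      (aeval fun i => X i + MvPolynomial.C (m i))
          (MvPolynomial.map (Int.castRingHom (AlgebraicClosure ℚ)) F) =
        MvPolynomial.map (Int.castRingHom (AlgebraicClosure ℚ)) F := by
  classical
  by_contra hQ
  push_neg at hQ
  choose N d hd hmem using fun i => exists_int_relation n F hQ i
  set D : ℤ := ∏ i, d i with hD
  have hDne : D ≠ 0 := Finset.prod_ne_zero_iff.mpr fun i _ => hd i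
  have hbadfin : {p : ℕ | p ∣ D.natAbs}.Finite := by
    apply Set.Finite.subset (Set.finite_Iic D.natAbs)
    intro p hp
    exact Nat.le_of_dvd (Int.natAbs_pos.mpr hDne) hp
  obtain ⟨p, hpmem, hpbad⟩ := (h.diff hbadfin).nonempty
  obtain ⟨hfact, m, hm0, hinv⟩ := hpmem
  haveI := hfact
  have hker : ∀ c ∈ coeffSet n F, eval m (MvPolynomial.map (Int.castRingHom (AlgebraicClosure (ZMod p))) c) = 0 :=
    (inv_iff n F (K := AlgebraicClosure (ZMod p)) m).mp hinv
  refine hm0 (funext fun i => ?_)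
  have h1 : eval m (MvPolynomial.map (Int.castRingHom (AlgebraicClosure (ZMod p))) (C (d i) * X i ^ N i)) = 0 := by
    have hle : Ideal.span (↑(coeffSet n F) : Set _) ≤
        RingHom.ker ((eval m).comp (MvPolynomial.map (Int.castRingHom (AlgebraicClosure (ZMod p))))) := by
      rw [Ideal.span_le]
      intro c hc
      simpa [RingHom.mem_ker] using hker c hc
    simpa using hle (hmem i)
  have h2 : (d i : AlgebraicClosure (ZMod p)) * m i ^ (N i) = 0 := by simpa using h1
  have hdK : (d i : AlgebraicClosure (ZMod p)) ≠ 0 := by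
    rw [Ne, CharP.intCast_eq_zero_iff (AlgebraicClosure (ZMod p)) p]
    intro hdvd
    apply hpbad
    have : (p : ℤ) ∣ D := dvd_trans hdvd (Finset.dvd_prod_of_mem _ (Finset.mem_univ i))
    simpa using Int.natAbs_dvd_natAbs.mpr this
  have h3 : m i ^ N i = 0 := by
    rcases mul_eq_zero.mp h2 with hcase | hcase
    · exact absurd hcase hdK
    · exact hcase
  by_cases hNi : N i = 0
  · rw [hNi, pow_zero] at h3
    exact absurd h3 one_ne_zero
  · exact (pow_eq_zero_iff hNi).mp h3
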